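/- For each A ⊆ [n] and s ∈ Z_{≥0}, the function f_{A,s}(M) = 1 if r_M(A) = s and 0 otherwise is a valuation under matroid subdivisions. Consequently the subset-rank function F(M) = Σ_{A⊆[n]} (A, r_M(A)), valued in the free abelian group on symbols (A,s), is a valuation. -/

import Mathlib

open Finset
open scoped Pointwise

/-- The indicator vector `e_B ∈ ℝⁿ` of a subset `B ⊆ [n]`. -/
def indVec (n : ℕ) (B : Finset (Fin n)) : Fin n → ℝ := fun i => if i ∈ B then 1 else 0

/-- A collection of subsets of `[n]` is the collection of bases of a matroid
(possibly the empty matroid) iff it satisfies the basis exchange axiom. -/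
def IsBases {n : ℕ} (𝓑 : Finset (Finset (Fin n))) : Prop :=
  ∀ B₁ ∈ 𝓑, ∀ B₂ ∈ 𝓑, ∀ b₁ ∈ B₁ \ B₂, ∃ b₂ ∈ B₂ \ B₁, insert b₂ (B₁.erase b₁) ∈ 𝓑

/-- The matroid (basis) polytope: convex hull of indicator vectors of the bases. -/
def polytope {n : ℕ} (𝓑 : Finset (Finset (Fin n))) : Set (Fin n → ℝ) :=
  convexHull ℝ (indVec n '' ↑𝓑)

/-- The rank of a subset `A` in the matroid with bases `𝓑`:
the maximal size of an intersection of `A` with a basis. -/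
def mrank {n : ℕ} (𝓑 : Finset (Finset (Fin n))) (A : Finset (Fin n)) : ℕ :=
  𝓑.sup fun B => (A ∩ B).card

/-- A subdivision of a polytope `P` into polytopes `Ps i`: their union is `P`,
their vertices are vertices of `P`, and each pairwise intersection is a proper
(exposed) face of both pieces. -/
def IsSubdivision {n m : ℕ} (P : Set (Fin n → ℝ)) (Ps : Fin m → Set (Fin n → ℝ)) : Prop :=
  (⋃ i, Ps i) = P ∧
  (∀ i, Set.extremePoints ℝ (Ps i) ⊆ Set.extremePoints ℝ P) ∧
  ∀ i j, i ≠ j →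
    IsExposed ℝ (Ps i) (Ps i ∩ Ps j) ∧ IsExposed ℝ (Ps j) (Ps i ∩ Ps j) ∧
    Ps i ∩ Ps j ≠ Ps i ∧ Ps i ∩ Ps j ≠ Ps j

/-- A matroid subdivision of the matroid `𝓑` into the matroids `𝓜 i`. -/
def IsMatroidSubdivision {n m : ℕ} (𝓑 : Finset (Finset (Fin n)))
    (𝓜 : Fin m → Finset (Finset (Fin n))) : Prop :=
  IsBases 𝓑 ∧ (∀ i, IsBases (𝓜 i)) ∧ IsSubdivision (polytope 𝓑) fun i => polytope (𝓜 i)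

open Classical in
/-- For `A ⊆ [m]`, the matroid `M_A` whose polytope is `⋂_{a ∈ A} Q(M_a)`:
its bases are the bases of `M` whose indicator vector lies in every `Q(M_a)`, `a ∈ A`.
For `A = ∅` this is `M` itself. -/
noncomputable def interMatroid {n m : ℕ} (𝓑 : Finset (Finset (Fin n)))
    (𝓜 : Fin m → Finset (Finset (Fin n))) (A : Finset (Fin m)) : Finset (Finset (Fin n)) :=
  𝓑.filter fun B => ∀ a ∈ A, indVec n B ∈ polytope (𝓜 a)

/-- `f` is a valuation under matroid subdivisions:
`∑_{A ⊆ [m]} (-1)^{|A|} f(M_A) = 0` for every matroid subdivision. -/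
def IsValuation {n : ℕ} {G : Type*} [AddCommGroup G] (f : Finset (Finset (Fin n)) → G) : Prop :=
  ∀ (m : ℕ) (𝓑 : Finset (Finset (Fin n))) (𝓜 : Fin m → Finset (Finset (Fin n))),
    IsMatroidSubdivision 𝓑 𝓜 →
    ∑ A : Finset (Fin m), (-1 : ℤ) ^ A.card • f (interMatroid 𝓑 𝓜 A) = 0


open Classical in
lemma euler_dim1 {ι : Type} [Fintype ι] (c : ι → ℤ) (K : ι → Set ℝ)
    (hconv : ∀ i, Convex ℝ (K i)) (hcomp : ∀ i, IsCompact (K i))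
    (h : ∀ x : ℝ, ∑ i, c i * (if x ∈ K i then 1 else 0) = 0) :
    ∑ i, c i * (if (K i).Nonempty then 1 else 0) = 0 := by
  classical
  set S : Finset ι := Finset.univ.filter fun i => (K i).Nonempty with hS
  have hmem : ∀ i, (K i).Nonempty → ∀ x : ℝ, x ∈ K i ↔ sInf (K i) ≤ x ∧ x ≤ sSup (K i) := by
    intro i hne x
    constructor
    · intro hx
      exact ⟨csInf_le (hcomp i).bddBelow hx, le_csSup (hcomp i).bddAbove hx⟩
    · intro hx
      exact (hconv i).ordConnected.out ((hcomp i).sInf_mem hne) ((hcomp i).sSup_mem hne) hx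
  -- key pointwise claim
  have key : ∀ t : ℝ, ∑ i ∈ S.filter (fun i => sSup (K i) = t), c i = 0 := by
    intro t
    set D : Finset ℝ := (S.image fun i => sInf (K i)) ∪ (S.image fun i => sSup (K i)) with hD
    set D' := D.filter (fun d => t < d) with hD'
    have hε : ∃ ε : ℝ, 0 < ε ∧ ∀ d ∈ D, t < d → t + ε < d := by
      by_cases hD'ne : D'.Nonempty
      · refine ⟨(D'.min' hD'ne - t) / 2, ?_, ?_⟩
        · have := (Finset.mem_filter.1 (D'.min'_mem hD'ne)).2
          linarith
        · intro d hd htd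
          have h1 : D'.min' hD'ne ≤ d := D'.min'_le d (Finset.mem_filter.2 ⟨hd, htd⟩)
          have h2 := (Finset.mem_filter.1 (D'.min'_mem hD'ne)).2
          linarith
      · refine ⟨1, one_pos, fun d hd htd => absurd ⟨d, Finset.mem_filter.2 ⟨hd, htd⟩⟩ hD'ne⟩
    obtain ⟨ε, hε0, hεlt⟩ := hε
    have claim2 : ∀ i : ι,
        ((if t ∈ K i then (1:ℤ) else 0) - (if t + ε ∈ K i then 1 else 0)) =
        (if (K i).Nonempty ∧ sSup (K i) = t then 1 else 0) := by
      intro i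
      by_cases hne : (K i).Nonempty
      · have hiS : i ∈ S := Finset.mem_filter.2 ⟨Finset.mem_univ _, hne⟩
        have hab : sInf (K i) ≤ sSup (K i) :=
          csInf_le_csSup hne (hcomp i).bddBelow (hcomp i).bddAbove
        have haD : sInf (K i) ∈ D := Finset.mem_union_left _ (Finset.mem_image_of_mem _ hiS)
        have hbD : sSup (K i) ∈ D := Finset.mem_union_right _ (Finset.mem_image_of_mem _ hiS)
        by_cases hbt : sSup (K i) = t
        · have ht : t ∈ K i := (hmem i hne t).2 ⟨hbt ▸ hab, hbt.ge⟩
          have ht' : t + ε ∉ K i := by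
            intro hc
            have := ((hmem i hne _).1 hc).2
            rw [hbt] at this
            linarith
          simp [ht, ht', hne, hbt]
        · by_cases ht : t ∈ K i
          · have htb : t < sSup (K i) :=
              lt_of_le_of_ne ((hmem i hne t).1 ht).2 (fun hc => hbt hc.symm)
            have ht' : t + ε ∈ K i := by
              refine (hmem i hne _).2 ⟨?_, ?_⟩
              · have := ((hmem i hne t).1 ht).1; linarith
              · exact le_of_lt (hεlt _ hbD htb)
            simp [ht, ht', hne, hbt]
          · have ht' : t + ε ∉ K i := by
              intro hc
              obtain ⟨h1, h2⟩ := (hmem i hne _).1 hc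
              have hnt := ht
              rw [hmem i hne t, not_and_or] at hnt
              rcases hnt with h3 | h3
              · push_neg at h3
                have := hεlt _ haD h3
                linarith
              · push_neg at h3
                linarith
            simp [ht, ht', hne, hbt]
      · have h1 : t ∉ K i := fun hc => hne ⟨t, hc⟩
        have h2 : t + ε ∉ K i := fun hc => hne ⟨_, hc⟩
        simp [h1, h2, hne]
    calc ∑ i ∈ S.filter (fun i => sSup (K i) = t), c i
        = ∑ i, c i * (if (K i).Nonempty ∧ sSup (K i) = t then 1 else 0) := by
          rw [Finset.filter_filter, Finset.sum_filter]
          exact Finset.sum_congr rfl fun i _ => by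
            by_cases h1 : (K i).Nonempty <;> by_cases h2 : sSup (K i) = t <;> simp [h1, h2]
      _ = ∑ i, c i * ((if t ∈ K i then (1:ℤ) else 0) - (if t + ε ∈ K i then 1 else 0)) := by
          exact Finset.sum_congr rfl fun i _ => by rw [claim2 i]
      _ = (∑ i, c i * (if t ∈ K i then (1:ℤ) else 0))
            - ∑ i, c i * (if t + ε ∈ K i then 1 else 0) := by
          rw [← Finset.sum_sub_distrib]
          exact Finset.sum_congr rfl fun i _ => mul_sub _ _ _
      _ = 0 := by rw [h t, h (t + ε), sub_zero]
  -- assemble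
  have h1 : ∑ i, c i * (if (K i).Nonempty then 1 else 0) = ∑ i ∈ S, c i := by
    rw [Finset.sum_filter]
    exact Finset.sum_congr rfl fun i _ => by by_cases hne : (K i).Nonempty <;> simp [hne]
  rw [h1]
  have h2 : ∀ i ∈ S, sSup (K i) ∈ S.image (fun i => sSup (K i)) :=
    fun i hi => Finset.mem_image_of_mem _ hi
  rw [← Finset.sum_fiberwise_of_maps_to h2 c]
  rw [Finset.sum_congr rfl fun t _ => key t, Finset.sum_const_zero]

open Classical in
lemma euler_lemma : ∀ (n : ℕ) {ι : Type} [Fintype ι] (c : ι → ℤ) (K : ι → Set (Fin n → ℝ)),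
    (∀ i, Convex ℝ (K i)) → (∀ i, IsCompact (K i)) →
    (∀ x, ∑ i, c i * (if x ∈ K i then 1 else 0) = 0) →
    ∑ i, c i * (if (K i).Nonempty then 1 else 0) = 0 := by
  intro n
  induction n with
  | zero =>
    intro ι _ c K hconv hcomp h
    have he : ∀ y z : Fin 0 → ℝ, y = z := fun y z => funext fun j => j.elim0
    refine Eq.trans (Finset.sum_congr rfl fun i _ => ?_) (h (fun _ => (0 : ℝ)))
    by_cases hne : (K i).Nonempty
    · obtain ⟨y, hy⟩ := hne
      have h0m : (fun _ : Fin 0 => (0:ℝ)) ∈ K i := by rwa [he (fun _ => 0) y]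
      rw [if_pos ⟨y, hy⟩, if_pos h0m]
    · have h0m : (fun _ : Fin 0 => (0:ℝ)) ∉ K i := fun hc => hne ⟨_, hc⟩
      rw [if_neg hne, if_neg h0m]
  | succ n ih =>
    intro ι _ c K hconv hcomp h
    set π : (Fin (n+1) → ℝ) → (Fin n → ℝ) := fun y => fun j => y j.castSucc with hπ
    set sn : (Fin n → ℝ) → ℝ → (Fin (n+1) → ℝ) := fun x t => Fin.snoc x t with hsn
    have hπcont : Continuous π := continuous_pi fun j => continuous_apply _
    set K' : ι → Set (Fin n → ℝ) := fun i => π '' K i with hK'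
    have hconv' : ∀ i, Convex ℝ (K' i) := by
      intro i
      have : K' i = (LinearMap.funLeft ℝ ℝ Fin.castSucc) '' K i := rfl
      rw [this]
      exact (hconv i).linear_image _
    have hcomp' : ∀ i, IsCompact (K' i) := fun i => (hcomp i).image hπcont
    have hmem' : ∀ (i : ι) (x : Fin n → ℝ),
        x ∈ K' i ↔ ({t : ℝ | sn x t ∈ K i}).Nonempty := by
      intro i x
      constructor
      · rintro ⟨y, hy, rfl⟩
        refine ⟨y (Fin.last n), ?_⟩
        show sn (π y) (y (Fin.last n)) ∈ K i
        have : sn (π y) (y (Fin.last n)) = y := by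
          have h1 : π y = Fin.init y := rfl
          rw [hsn, h1]
          exact Fin.snoc_init_self y
        rw [this]
        exact hy
      · rintro ⟨t, ht⟩
        refine ⟨sn x t, ht, ?_⟩
        funext j
        show (sn x t) j.castSucc = x j
        simp only [hsn]
        exact Fin.snoc_castSucc _ _ _
    have h' : ∀ x : Fin n → ℝ, ∑ i, c i * (if x ∈ K' i then 1 else 0) = 0 := by
      intro x
      set J : ι → Set ℝ := fun i => {t : ℝ | sn x t ∈ K i} with hJ
      have hsnc : Continuous (sn x) := by
        refine continuous_pi fun j => ?_
        refine Fin.lastCases ?_ ?_ j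
        · have : (fun t : ℝ => sn x t (Fin.last n)) = fun t => t := by
            funext t; simp only [hsn]; exact Fin.snoc_last _ _
          rw [this]; exact continuous_id
        · intro j'
          have : (fun t : ℝ => sn x t j'.castSucc) = fun _ => x j' := by
            funext t; simp only [hsn]; exact Fin.snoc_castSucc _ _ _
          rw [this]; exact continuous_const
      have hJconv : ∀ i, Convex ℝ (J i) := by
        intro i t1 ht1 t2 ht2 a b ha hb hab
        show sn x (a • t1 + b • t2) ∈ K i
        have heq : sn x (a • t1 + b • t2) = a • sn x t1 + b • sn x t2 := by
          funext j
          refine Fin.lastCases ?_ ?_ j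
          · simp only [hsn, Pi.add_apply, Pi.smul_apply]
            rw [Fin.snoc_last, Fin.snoc_last, Fin.snoc_last]
          · intro j'
            simp only [hsn, Pi.add_apply, Pi.smul_apply]
            rw [Fin.snoc_castSucc, Fin.snoc_castSucc, Fin.snoc_castSucc]
            simp only [smul_eq_mul]
            rw [← add_mul, hab, one_mul]
        rw [heq]
        exact hconv i ht1 ht2 ha hb hab
      have hJcomp : ∀ i, IsCompact (J i) := by
        intro i
        have hcl : IsClosed (J i) := (hcomp i).isClosed.preimage hsnc
        have hsub : J i ⊆ (fun y : Fin (n+1) → ℝ => y (Fin.last n)) '' K i := by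
          intro t ht
          refine ⟨sn x t, ht, ?_⟩
          simp only [hsn]
          exact Fin.snoc_last _ _
        exact ((hcomp i).image (continuous_apply (Fin.last n))).of_isClosed_subset hcl hsub
      have hJh : ∀ t : ℝ, ∑ i, c i * (if t ∈ J i then 1 else 0) = 0 := fun t => h (sn x t)
      refine Eq.trans (Finset.sum_congr rfl fun i _ => ?_) (euler_dim1 c J hJconv hJcomp hJh)
      rw [hmem' i x]
    refine Eq.trans (Finset.sum_congr rfl fun i _ => ?_) (ih c K' hconv' hcomp' h')
    congr 1
    simp only [hK', Set.image_nonempty]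

open Classical in
lemma key_count {n m : ℕ} (𝓑 : Finset (Finset (Fin n))) (𝓜 : Fin m → Finset (Finset (Fin n)))
    (h : IsMatroidSubdivision 𝓑 𝓜) (A₀ : Finset (Fin n)) (s : ℕ) :
    ∑ A : Finset (Fin m), (-1:ℤ)^A.card *
      (if (interMatroid 𝓑 𝓜 A).Nonempty ∧ s ≤ mrank (interMatroid 𝓑 𝓜 A) A₀ then 1 else 0)
      = 0 := by
  classical
  obtain ⟨hB, hM, hunion, hext, hfaces⟩ := h
  set P : Set (Fin n → ℝ) := polytope 𝓑 with hP
  set Q : Fin m → Set (Fin n → ℝ) := fun a => polytope (𝓜 a) with hQ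
  -- the linear functional
  set ℓ : (Fin n → ℝ) →ₗ[ℝ] ℝ := ∑ i ∈ A₀, LinearMap.proj i with hℓ
  set ℓC : (Fin n → ℝ) →L[ℝ] ℝ := LinearMap.toContinuousLinearMap ℓ with hℓC
  have hℓCapp : ∀ x : Fin n → ℝ, ℓC x = ∑ i ∈ A₀, x i := by
    intro x
    rw [hℓC, LinearMap.coe_toContinuousLinearMap', hℓ]
    simp [LinearMap.proj_apply]
  set H : Set (Fin n → ℝ) := {x | (s : ℝ) ≤ ℓC x} with hH
  have Hconv : Convex ℝ H := convex_halfSpace_ge (IsLinearMap.mk ℓC.map_add ℓC.map_smul) _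
  have Hclosed : IsClosed H := isClosed_le continuous_const ℓC.continuous
  set K : Finset (Fin m) → Set (Fin n → ℝ) := fun A => (P ∩ ⋂ a ∈ A, Q a) ∩ H with hK
  -- basic facts
  have compactP : IsCompact P := (𝓑.finite_toSet.image _).isCompact_convexHull ℝ
  have convexP : Convex ℝ P := convex_convexHull ℝ _
  have compactQ : ∀ a, IsCompact (Q a) := fun a => ((𝓜 a).finite_toSet.image _).isCompact_convexHull ℝ
  have convexQ : ∀ a, Convex ℝ (Q a) := fun a => convex_convexHull ℝ _
  have hQP : ∀ a, Q a ⊆ P := by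
    intro a
    calc Q a = closure (convexHull ℝ (Set.extremePoints ℝ (Q a))) :=
          (closure_convexHull_extremePoints (compactQ a) (convexQ a)).symm
      _ ⊆ closure (convexHull ℝ (Set.extremePoints ℝ P)) :=
          closure_mono (convexHull_mono (hext a))
      _ ⊆ closure P := closure_mono (convexHull_min extremePoints_subset convexP)
      _ = P := compactP.isClosed.closure_eq
  have hextP : Set.extremePoints ℝ P ⊆ indVec n '' ↑𝓑 := extremePoints_convexHull_subset
  have hCclosed : ∀ A : Finset (Fin m), IsClosed (⋂ a ∈ A, Q a) :=
    fun A => isClosed_biInter fun a _ => (compactQ a).isClosed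
  have hCcomp : ∀ A : Finset (Fin m), IsCompact (P ∩ ⋂ a ∈ A, Q a) :=
    fun A => compactP.inter_right (hCclosed A)
  have hCconv : ∀ A : Finset (Fin m), Convex ℝ (P ∩ ⋂ a ∈ A, Q a) :=
    fun A => convexP.inter (convex_iInter fun a => convex_iInter fun _ => convexQ a)
  -- vertices of intersections are vertices of P
  have hvert : ∀ A : Finset (Fin m),
      Set.extremePoints ℝ (P ∩ ⋂ a ∈ A, Q a) ⊆ indVec n '' ↑𝓑 := by
    intro A
    rcases A.eq_empty_or_nonempty with rfl | ⟨a₀, ha₀⟩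
    · have he : (P ∩ ⋂ a ∈ (∅ : Finset (Fin m)), Q a) = P := by simp
      rw [he]; exact hextP
    · have hexp : ∀ A' : Finset (Fin m),
          IsExposed ℝ (Q a₀) (Q a₀ ∩ ⋂ a ∈ A', (Q a₀ ∩ Q a)) := by
        intro A'
        induction A' using Finset.induction with
        | empty => simpa using IsExposed.refl (𝕜 := ℝ) (Q a₀)
        | @insert a A'' ha ih =>
          have hset : Q a₀ ∩ ⋂ b ∈ insert a A'', (Q a₀ ∩ Q b) =
              (Q a₀ ∩ (Q a₀ ∩ Q a)) ∩ (Q a₀ ∩ ⋂ b ∈ A'', (Q a₀ ∩ Q b)) := by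
            ext x
            simp only [Finset.set_biInter_insert, Set.mem_inter_iff, Set.mem_iInter]
            tauto
          rw [hset]
          have h1 : IsExposed ℝ (Q a₀) (Q a₀ ∩ (Q a₀ ∩ Q a)) := by
            by_cases haa : a₀ = a
            · subst haa
              simpa [Set.inter_self] using IsExposed.refl (𝕜 := ℝ) (Q a₀)
            · have h2 : IsExposed ℝ (Q a₀) (Q a₀ ∩ Q a) := (hfaces a₀ a haa).1
              have h3 : Q a₀ ∩ (Q a₀ ∩ Q a) = Q a₀ ∩ Q a := by
                rw [← Set.inter_assoc, Set.inter_self]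
              rw [h3]; exact h2
          exact h1.inter ih
      have hsub2 : P ∩ ⋂ a ∈ A, Q a = Q a₀ ∩ ⋂ a ∈ A, (Q a₀ ∩ Q a) := by
        ext x
        simp only [Set.mem_inter_iff, Set.mem_iInter]
        constructor
        · rintro ⟨hxP, hxQ⟩
          exact ⟨hxQ a₀ ha₀, fun a ha => ⟨hxQ a₀ ha₀, hxQ a ha⟩⟩
        · rintro ⟨hxQ0, hxQ⟩
          exact ⟨hQP a₀ hxQ0, fun a ha => (hxQ a ha).2⟩
      rw [hsub2]
      exact fun x hx =>
        hextP (hext a₀ (((hexp A).isExtreme).extremePoints_subset_extremePoints hx))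
  -- membership translation
  have hmem_inter : ∀ (A : Finset (Fin m)) (B : Finset (Fin n)),
      B ∈ interMatroid 𝓑 𝓜 A ↔ B ∈ 𝓑 ∧ ∀ a ∈ A, indVec n B ∈ Q a := by
    intro A B
    simp only [interMatroid, Finset.mem_filter, hQ]
  have hBP : ∀ B ∈ 𝓑, indVec n B ∈ P := fun B hB => subset_convexHull ℝ _ ⟨B, hB, rfl⟩
  have hval : ∀ B : Finset (Fin n), ℓC (indVec n B) = ((A₀ ∩ B).card : ℝ) := by
    intro B
    rw [hℓCapp]
    unfold indVec
    rw [Finset.sum_boole, Finset.filter_mem_eq_inter]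
  -- main equivalence
  have hKiff : ∀ A : Finset (Fin m), (K A).Nonempty ↔
      ((interMatroid 𝓑 𝓜 A).Nonempty ∧ s ≤ mrank (interMatroid 𝓑 𝓜 A) A₀) := by
    intro A
    constructor
    · rintro ⟨x, ⟨hxPQ, hxH⟩⟩
      obtain ⟨z, hzC, hz⟩ := (hCcomp A).exists_isMaxOn ⟨x, hxPQ⟩ ℓC.continuous.continuousOn
      set F := {y ∈ P ∩ ⋂ a ∈ A, Q a | ∀ w ∈ P ∩ ⋂ a ∈ A, Q a, ℓC w ≤ ℓC y} with hF
      have hFexp : IsExposed ℝ (P ∩ ⋂ a ∈ A, Q a) F := fun _ => ⟨ℓC, rfl⟩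
      have hzF : z ∈ F := ⟨hzC, fun w hw => hz hw⟩
      obtain ⟨e, he⟩ := (hFexp.isCompact (hCcomp A)).extremePoints_nonempty ⟨z, hzF⟩
      have heC : e ∈ Set.extremePoints ℝ (P ∩ ⋂ a ∈ A, Q a) :=
        hFexp.isExtreme.extremePoints_subset_extremePoints he
      obtain ⟨B, hB, hBe⟩ := hvert A heC
      have heF : e ∈ F := he.1
      have hBN : B ∈ interMatroid 𝓑 𝓜 A := by
        refine (hmem_inter A B).2 ⟨hB, fun a ha => ?_⟩
        rw [hBe]
        exact Set.mem_iInter₂.1 heF.1.2 a ha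
      refine ⟨⟨B, hBN⟩, ?_⟩
      have h1 : (s : ℝ) ≤ ℓC x := hxH
      have h2 : ℓC x ≤ ℓC e := heF.2 x hxPQ
      have h3 : ℓC e = ((A₀ ∩ B).card : ℝ) := by rw [← hBe]; exact hval B
      have h4 : s ≤ (A₀ ∩ B).card := by
        rw [h3] at h2
        exact_mod_cast le_trans h1 h2
      have h5 : (A₀ ∩ B).card ≤ mrank (interMatroid 𝓑 𝓜 A) A₀ := by
        show _ ≤ (interMatroid 𝓑 𝓜 A).sup (fun B : Finset (Fin n) => (A₀ ∩ B).card)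
        exact Finset.le_sup (f := fun B : Finset (Fin n) => (A₀ ∩ B).card) hBN
      exact le_trans h4 h5
    · rintro ⟨hne, hrank⟩
      obtain ⟨B, hBN, hBsup⟩ :=
        Finset.exists_mem_eq_sup (α := ℕ) (interMatroid 𝓑 𝓜 A) hne (fun B : Finset (Fin n) => (A₀ ∩ B).card)
      have hB𝓑 := ((hmem_inter A B).1 hBN).1
      refine ⟨indVec n B, ⟨⟨hBP B hB𝓑, ?_⟩, ?_⟩⟩
      · exact Set.mem_iInter₂.2 fun a ha => ((hmem_inter A B).1 hBN).2 a ha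
      · show (s : ℝ) ≤ ℓC (indVec n B)
        rw [hval]
        have : s ≤ (A₀ ∩ B).card := by
          rw [← hBsup]
          exact hrank
        exact_mod_cast this
  -- Euler lemma application
  have hKconv : ∀ A : Finset (Fin m), Convex ℝ (K A) := fun A => (hCconv A).inter Hconv
  have hKcomp : ∀ A : Finset (Fin m), IsCompact (K A) :=
    fun A => (hCcomp A).inter_right Hclosed
  have hpt : ∀ x : Fin n → ℝ,
      ∑ A : Finset (Fin m), (-1:ℤ)^A.card * (@ite ℤ (x ∈ K A) (Classical.propDecidable _) 1 0) = 0 := by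
    intro x
    by_cases hxP : x ∈ P ∧ x ∈ H
    · set T : Finset (Fin m) := Finset.univ.filter (fun a => x ∈ Q a) with hT
      have hxT : ∀ A : Finset (Fin m), x ∈ K A ↔ A ⊆ T := by
        intro A
        constructor
        · rintro ⟨⟨_, hxQ⟩, _⟩ a ha
          exact Finset.mem_filter.2 ⟨Finset.mem_univ _, Set.mem_iInter₂.1 hxQ a ha⟩
        · intro hAT
          exact ⟨⟨hxP.1, Set.mem_iInter₂.2 fun a ha => (Finset.mem_filter.1 (hAT ha)).2⟩, hxP.2⟩
      have hTne : T ≠ ∅ := by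
        have hxU : x ∈ ⋃ i, Q i := by
          rw [hQ]
          show x ∈ ⋃ i, (fun i => polytope (𝓜 i)) i
          rw [hunion]
          exact hxP.1
        obtain ⟨a, ha⟩ := Set.mem_iUnion.1 hxU
        exact Finset.ne_empty_of_mem (Finset.mem_filter.2 ⟨Finset.mem_univ _, ha⟩)
      calc ∑ A : Finset (Fin m), (-1:ℤ)^A.card * (@ite ℤ (x ∈ K A) (Classical.propDecidable _) 1 0)
          = ∑ A : Finset (Fin m), (if A ⊆ T then (-1:ℤ)^A.card else 0) := by
            refine Finset.sum_congr rfl fun A _ => ?_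
            by_cases hsub : A ⊆ T
            · rw [if_pos ((hxT A).2 hsub), if_pos hsub, mul_one]
            · rw [if_neg (fun hc => hsub ((hxT A).1 hc)), if_neg hsub, mul_zero]
        _ = ∑ A ∈ Finset.univ.filter (fun A => A ⊆ T), (-1:ℤ)^A.card := by
            rw [Finset.sum_filter]
        _ = ∑ A ∈ T.powerset, (-1:ℤ)^A.card := by
            congr 1
            ext A
            simp [Finset.mem_powerset]
        _ = 0 := by
            rw [Finset.sum_powerset_neg_one_pow_card, if_neg hTne]
    · have hz : ∀ A : Finset (Fin m), x ∉ K A := fun A hxK => hxP ⟨hxK.1.1, hxK.2⟩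
      simp [hz]
  refine Eq.trans (Finset.sum_congr rfl fun A _ => ?_)
    (euler_lemma n (fun A : Finset (Fin m) => (-1:ℤ)^A.card) K hKconv hKcomp hpt)
  congr 1
  exact if_congr (hKiff A).symm rfl rfl

open Classical in
lemma count_eq {n m : ℕ} (𝓑 : Finset (Finset (Fin n))) (𝓜 : Fin m → Finset (Finset (Fin n)))
    (h : IsMatroidSubdivision 𝓑 𝓜) (A₀ : Finset (Fin n)) (s : ℕ) :
    ∑ A : Finset (Fin m), (-1:ℤ)^A.card *
      (if (interMatroid 𝓑 𝓜 A).Nonempty ∧ mrank (interMatroid 𝓑 𝓜 A) A₀ = s then 1 else 0)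
      = 0 := by
  have h1 := key_count 𝓑 𝓜 h A₀ s
  have h2 := key_count 𝓑 𝓜 h A₀ (s+1)
  calc ∑ A : Finset (Fin m), (-1:ℤ)^A.card *
      (if (interMatroid 𝓑 𝓜 A).Nonempty ∧ mrank (interMatroid 𝓑 𝓜 A) A₀ = s then 1 else 0)
      = (∑ A : Finset (Fin m), (-1:ℤ)^A.card *
          (if (interMatroid 𝓑 𝓜 A).Nonempty ∧ s ≤ mrank (interMatroid 𝓑 𝓜 A) A₀ then 1 else 0))
        - ∑ A : Finset (Fin m), (-1:ℤ)^A.card *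
          (if (interMatroid 𝓑 𝓜 A).Nonempty ∧ s+1 ≤ mrank (interMatroid 𝓑 𝓜 A) A₀ then 1 else 0) := by
        rw [← Finset.sum_sub_distrib]
        refine Finset.sum_congr rfl fun A _ => ?_
        rw [← mul_sub]
        congr 1
        by_cases hne : (interMatroid 𝓑 𝓜 A).Nonempty
        · simp only [hne, true_and]
          split_ifs <;> omega
        · simp only [hne, false_and, if_false]
          ring
    _ = 0 := by rw [h1, h2, sub_zero]

open Classical in
lemma indicator_val {n : ℕ} (A₀ : Finset (Fin n)) (s : ℕ) :
    IsValuation fun 𝓑 : Finset (Finset (Fin n)) =>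
      if 𝓑.Nonempty ∧ mrank 𝓑 A₀ = s then (1 : ℤ) else 0 := by
  intro m 𝓑 𝓜 h
  simpa only [smul_eq_mul] using count_eq 𝓑 𝓜 h A₀ s

open Classical in
lemma rep_F {n : ℕ} (𝓒 : Finset (Finset (Fin n))) :
    (if 𝓒 = ∅ then 0 else
      ∑ A : Finset (Fin n), FreeAbelianGroup.of ((A, mrank 𝓒 A) : Finset (Fin n) × ℕ))
    = ∑ A : Finset (Fin n), ∑ s ∈ Finset.range (n+1),
        (if 𝓒.Nonempty ∧ mrank 𝓒 A = s then (1:ℤ) else 0) •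
          FreeAbelianGroup.of ((A, s) : Finset (Fin n) × ℕ) := by
  by_cases hne : 𝓒 = ∅
  · subst hne
    simp [Finset.not_nonempty_empty]
  · rw [if_neg hne]
    have h𝓒ne : 𝓒.Nonempty := Finset.nonempty_iff_ne_empty.2 hne
    refine Finset.sum_congr rfl fun A _ => Eq.symm ?_
    have hle : mrank 𝓒 A ≤ n := by
      have h1 : mrank 𝓒 A ≤ A.card :=
        Finset.sup_le fun B _ => Finset.card_le_card Finset.inter_subset_left
      refine h1.trans ((Finset.card_le_univ A).trans ?_)
      simp
    rw [Finset.sum_eq_single (mrank 𝓒 A)]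
    · rw [if_pos ⟨h𝓒ne, rfl⟩, one_smul]
    · intro s _ hsne
      rw [if_neg (fun hc => hsne hc.2.symm), zero_smul]
    · intro hnotin
      exact absurd (Finset.mem_range.2 (Nat.lt_succ_of_le hle)) hnotin

open Classical in
/-- For each `A ⊆ [n]`, `s ∈ ℤ_{≥0}`, the indicator `f_{A,s}(M) = [r_M(A) = s]`
(with value `0` on the empty matroid) is a valuation; consequently the subset-rank
function `F(M) = ∑_{A ⊆ [n]} (A, r_M(A))`, valued in the free abelian group on
symbols `(A, s)`, is a valuation. -/
theorem statement_13 (n : ℕ) :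
    (∀ (A : Finset (Fin n)) (s : ℕ),
      IsValuation fun 𝓑 : Finset (Finset (Fin n)) =>
        if 𝓑.Nonempty ∧ mrank 𝓑 A = s then (1 : ℤ) else 0) ∧
    IsValuation fun 𝓑 : Finset (Finset (Fin n)) =>
      if 𝓑 = ∅ then 0 else
        ∑ A : Finset (Fin n),
          FreeAbelianGroup.of ((A, mrank 𝓑 A) : Finset (Fin n) × ℕ) := by
  constructor
  · exact fun A s => indicator_val A s
  · intro m 𝓑 𝓜 h
    have hcount : ∀ (A₀ : Finset (Fin n)) (s : ℕ),
        ∑ A : Finset (Fin m), (-1:ℤ)^A.card *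
          (if (interMatroid 𝓑 𝓜 A).Nonempty ∧ mrank (interMatroid 𝓑 𝓜 A) A₀ = s then 1 else 0)
          = 0 := fun A₀ s => count_eq 𝓑 𝓜 h A₀ s
    calc ∑ A : Finset (Fin m), (-1:ℤ)^A.card •
          (if interMatroid 𝓑 𝓜 A = ∅ then 0 else
            ∑ A₀ : Finset (Fin n),
              FreeAbelianGroup.of ((A₀, mrank (interMatroid 𝓑 𝓜 A) A₀) : Finset (Fin n) × ℕ))
        = ∑ A : Finset (Fin m), ∑ A₀ : Finset (Fin n), ∑ s ∈ Finset.range (n+1),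
            ((-1:ℤ)^A.card *
              (if (interMatroid 𝓑 𝓜 A).Nonempty ∧ mrank (interMatroid 𝓑 𝓜 A) A₀ = s
                then 1 else 0)) •
              FreeAbelianGroup.of ((A₀, s) : Finset (Fin n) × ℕ) := by
          refine Finset.sum_congr rfl fun A _ => ?_
          rw [rep_F, Finset.smul_sum]
          refine Finset.sum_congr rfl fun A₀ _ => ?_
          rw [Finset.smul_sum]
          refine Finset.sum_congr rfl fun s _ => ?_
          rw [smul_smul]
      _ = 0 := by
          rw [Finset.sum_comm]
          refine Finset.sum_eq_zero fun A₀ _ => ?_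
          rw [Finset.sum_comm]
          refine Finset.sum_eq_zero fun s _ => ?_
          rw [← Finset.sum_smul, hcount A₀ s, zero_smul]
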